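/- Let k be a commutative ring, A a commutative k-algebra and n ≥ 1 an integer. Set ρ(n) = (n+1)/2 if n is odd and ρ(n) = ⌊(n+1)/3⌋ if n is even. Assume every k-derivation of A is ρ(n)-integrable (i.e. Ider_k(A;ρ(n)) = Der_k(A)). Then for every n-integrable k-derivation δ of A, the following are equivalent: (a) every n-integral of δ is (n+1)-integrable; (b) there exists an n-integral of δ which is (n+1)-integrable. -/

import Mathlib

/-- `IsHS k A n D` says that the sequence `D` of `k`-linear endomorphisms of `A` is a
Hasse–Schmidt derivation of `A` over `k` of length `n` (with `n = ⊤` encoding length `∞`):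
`D 0 = id` and the Leibniz rule `D i (x*y) = ∑_{r+s=i} D r x * D s y` holds for `1 ≤ i ≤ n`.
(The values `D i` for `i > n` are irrelevant.) -/
def IsHS (k A : Type*) [CommRing k] [CommRing A] [Algebra k A]
    (n : ℕ∞) (D : ℕ → (A →ₗ[k] A)) : Prop :=
  D 0 = LinearMap.id ∧
  ∀ i : ℕ, 1 ≤ i → (i : ℕ∞) ≤ n → ∀ x y : A,
    D i (x * y) = ∑ p ∈ Finset.HasAntidiagonal.antidiagonal i, D p.1 x * D p.2 y

namespace HSStmt19

open Finset

/-! ### Sum regrouping lemmas -/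

lemma quad {M : Type*} [AddCommMonoid M] (i : ℕ) (H : ℕ → ℕ → ℕ → ℕ → M) :
    ∑ p ∈ antidiagonal i, ∑ a ∈ antidiagonal p.1, ∑ b ∈ antidiagonal p.2,
      H a.1 a.2 b.1 b.2
    = ∑ p ∈ antidiagonal i, ∑ a ∈ antidiagonal p.1, ∑ b ∈ antidiagonal p.2,
      H a.1 b.1 a.2 b.2 := by
  have flat : ∀ K : ℕ → ℕ → ℕ → ℕ → M,
      (∑ p ∈ antidiagonal i, ∑ a ∈ antidiagonal p.1, ∑ b ∈ antidiagonal p.2,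
        K a.1 a.2 b.1 b.2)
      = ∑ x ∈ (antidiagonal i).sigma
          (fun p : ℕ × ℕ => antidiagonal p.1 ×ˢ antidiagonal p.2),
          K x.2.1.1 x.2.1.2 x.2.2.1 x.2.2.2 := by
    intro K
    rw [Finset.sum_sigma]
    exact sum_congr rfl fun p _ => by rw [Finset.sum_product]
  rw [flat, flat (fun a b c d => H a c b d)]
  refine Finset.sum_nbij'
    (fun x => ⟨(x.2.1.1 + x.2.2.1, x.2.1.2 + x.2.2.2),
      ((x.2.1.1, x.2.2.1), (x.2.1.2, x.2.2.2))⟩)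
    (fun x => ⟨(x.2.1.1 + x.2.2.1, x.2.1.2 + x.2.2.2),
      ((x.2.1.1, x.2.2.1), (x.2.1.2, x.2.2.2))⟩)
    ?_ ?_ ?_ ?_ ?_
  · rintro ⟨⟨p1, p2⟩, ⟨⟨a1, a2⟩, ⟨b1, b2⟩⟩⟩ hx
    simp only [mem_sigma, mem_product, HasAntidiagonal.mem_antidiagonal, and_true, true_and] at hx ⊢
    omega
  · rintro ⟨⟨p1, p2⟩, ⟨⟨a1, a2⟩, ⟨b1, b2⟩⟩⟩ hx
    simp only [mem_sigma, mem_product, HasAntidiagonal.mem_antidiagonal, and_true, true_and] at hx ⊢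
    omega
  · rintro ⟨⟨p1, p2⟩, ⟨⟨a1, a2⟩, ⟨b1, b2⟩⟩⟩ hx
    simp only [mem_sigma, mem_product, HasAntidiagonal.mem_antidiagonal] at hx
    simp only [Sigma.mk.inj_iff, Prod.mk.injEq, heq_eq_eq, and_true, true_and]
    omega
  · rintro ⟨⟨p1, p2⟩, ⟨⟨a1, a2⟩, ⟨b1, b2⟩⟩⟩ hx
    simp only [mem_sigma, mem_product, HasAntidiagonal.mem_antidiagonal] at hx
    simp only [Sigma.mk.inj_iff, Prod.mk.injEq, heq_eq_eq, and_true, true_and]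
    omega
  · rintro ⟨⟨p1, p2⟩, ⟨⟨a1, a2⟩, ⟨b1, b2⟩⟩⟩ _
    rfl

lemma triple {M : Type*} [AddCommMonoid M] (i : ℕ) (H : ℕ → ℕ → ℕ → M) :
    ∑ p ∈ antidiagonal i, ∑ a ∈ antidiagonal p.1, H a.1 a.2 p.2
    = ∑ p ∈ antidiagonal i, ∑ b ∈ antidiagonal p.2, H p.1 b.1 b.2 := by
  rw [Finset.sum_sigma', Finset.sum_sigma']
  refine Finset.sum_nbij'
    (fun x => ⟨(x.2.1, x.2.2 + x.1.2), (x.2.2, x.1.2)⟩)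
    (fun x => ⟨(x.1.1 + x.2.1, x.2.2), (x.1.1, x.2.1)⟩)
    ?_ ?_ ?_ ?_ ?_
  · rintro ⟨⟨p1, p2⟩, ⟨a1, a2⟩⟩ hx
    simp only [mem_sigma, HasAntidiagonal.mem_antidiagonal, and_true, true_and] at hx ⊢
    omega
  · rintro ⟨⟨p1, p2⟩, ⟨a1, a2⟩⟩ hx
    simp only [mem_sigma, HasAntidiagonal.mem_antidiagonal, and_true, true_and] at hx ⊢
    omega
  · rintro ⟨⟨p1, p2⟩, ⟨a1, a2⟩⟩ hx
    simp only [mem_sigma, HasAntidiagonal.mem_antidiagonal] at hx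
    simp only [Sigma.mk.inj_iff, Prod.mk.injEq, heq_eq_eq, and_true, true_and]
    omega
  · rintro ⟨⟨p1, p2⟩, ⟨a1, a2⟩⟩ hx
    simp only [mem_sigma, HasAntidiagonal.mem_antidiagonal] at hx
    simp only [Sigma.mk.inj_iff, Prod.mk.injEq, heq_eq_eq, and_true, true_and]
    omega
  · rintro ⟨⟨p1, p2⟩, ⟨a1, a2⟩⟩ _
    rfl

variable {k A : Type*} [CommRing k] [CommRing A] [Algebra k A]

/-! ### The group of power series substitutions -/

/-- Composition (group law) of sequences of endomorphisms. -/
def comp (D E : ℕ → (A →ₗ[k] A)) : ℕ → (A →ₗ[k] A) :=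
  fun i => ∑ p ∈ antidiagonal i, D p.1 * E p.2

/-- The identity sequence. -/
def one : ℕ → (A →ₗ[k] A) := fun i => if i = 0 then LinearMap.id else 0

/-- Inverse for `comp` (when `D 0 = id`). -/
def hsInv (D : ℕ → (A →ₗ[k] A)) : ℕ → (A →ₗ[k] A)
  | 0 => LinearMap.id
  | (i+1) => - ∑ j ∈ (range (i+1)).attach,
      D (i+1-j.1) * hsInv D j.1
decreasing_by exact mem_range.mp j.2

lemma hsInv_zero (D : ℕ → (A →ₗ[k] A)) : hsInv D 0 = LinearMap.id := by rw [hsInv]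

lemma hsInv_succ (D : ℕ → (A →ₗ[k] A)) (i : ℕ) :
    hsInv D (i+1) = - ∑ j ∈ range (i+1), D (i+1-j) * hsInv D j := by
  rw [hsInv]
  congr 1
  exact Finset.sum_attach (range (i+1)) (fun j => D (i+1-j) * hsInv D j)

lemma comp_one (D : ℕ → (A →ₗ[k] A)) : comp D one = D := by
  funext i
  rw [comp, Finset.sum_eq_single (i, 0)]
  · simp [one, Module.End.mul_eq_comp]
  · rintro ⟨a, b⟩ hab hne
    simp only [HasAntidiagonal.mem_antidiagonal] at hab
    rcases Nat.eq_zero_or_pos b with hb | hb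
    · exfalso; apply hne; subst hb
      obtain rfl : a = i := by omega
      rfl
    · simp [one, Nat.pos_iff_ne_zero.mp hb]
  · intro h; exact absurd (by simp [HasAntidiagonal.mem_antidiagonal]) h

lemma one_comp (D : ℕ → (A →ₗ[k] A)) : comp one D = D := by
  funext i
  rw [comp, Finset.sum_eq_single (0, i)]
  · simp [one, Module.End.mul_eq_comp]
  · rintro ⟨a, b⟩ hab hne
    simp only [HasAntidiagonal.mem_antidiagonal] at hab
    rcases Nat.eq_zero_or_pos a with ha | ha
    · exfalso; apply hne; subst ha
      obtain rfl : b = i := by omega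
      rfl
    · simp [one, Nat.pos_iff_ne_zero.mp ha]
  · intro h; exact absurd (by simp [HasAntidiagonal.mem_antidiagonal]) h

lemma comp_assoc (D E G : ℕ → (A →ₗ[k] A)) :
    comp (comp D E) G = comp D (comp E G) := by
  funext i
  show ∑ p ∈ antidiagonal i, (∑ a ∈ antidiagonal p.1, D a.1 * E a.2) * G p.2
     = ∑ p ∈ antidiagonal i, D p.1 * (∑ b ∈ antidiagonal p.2, E b.1 * G b.2)
  simp only [Finset.sum_mul, Finset.mul_sum, mul_assoc]
  exact triple i (fun a b c => D a * (E b * G c))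

lemma comp_hsInv (D : ℕ → (A →ₗ[k] A)) (hD0 : D 0 = LinearMap.id) :
    comp D (hsInv D) = one := by
  funext i
  match i with
  | 0 => simp [comp, one, hD0, hsInv_zero]; rfl
  | (i+1) =>
    rw [comp, Finset.Nat.sum_antidiagonal_eq_sum_range_succ_mk, Finset.sum_range_succ',
      one]
    simp only [Nat.sub_zero, hD0, if_neg (Nat.succ_ne_zero i)]
    have hid : LinearMap.id * hsInv D (i+1) = hsInv D (i+1) := by
      ext v; rfl
    have hre : ∑ k ∈ range (i+1), D (k+1) * hsInv D (i + 1 - (k+1))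
        = ∑ j ∈ range (i+1), D (i+1-j) * hsInv D j := by
      rw [← Finset.sum_range_reflect]
      refine sum_congr rfl fun j hj => ?_
      have hj' : j < i + 1 := mem_range.mp hj
      congr 2 <;> omega
    rw [hid, hre, hsInv_succ]
    exact add_neg_cancel _

lemma hsInv_comp (D : ℕ → (A →ₗ[k] A)) (hD0 : D 0 = LinearMap.id) :
    comp (hsInv D) D = one := by
  have h1 : comp (hsInv D) (hsInv (hsInv D)) = one :=
    comp_hsInv (hsInv D) (hsInv_zero D)
  calc comp (hsInv D) D
      = comp (comp (hsInv D) D) (comp (hsInv D) (hsInv (hsInv D))) := by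
        rw [h1, comp_one]
    _ = comp (hsInv D) (comp (comp D (hsInv D)) (hsInv (hsInv D))) := by
        rw [comp_assoc, comp_assoc]
    _ = one := by rw [comp_hsInv D hD0, one_comp, h1]

/-! ### Hasse–Schmidt lemmas -/

/-- Leibniz rule including the case `i = 0`. -/
lemma leib {n : ℕ} {D : ℕ → (A →ₗ[k] A)} (hD : IsHS k A n D)
    {a : ℕ} (ha : a ≤ n) (x y : A) :
    D a (x * y) = ∑ p ∈ antidiagonal a, D p.1 x * D p.2 y := by
  rcases Nat.eq_zero_or_pos a with rfl | hpos
  · simp [hD.1]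
  · exact hD.2 a hpos (by exact_mod_cast ha) x y

lemma isHS_mono {m n : ℕ} (h : m ≤ n) {D : ℕ → (A →ₗ[k] A)}
    (hD : IsHS k A n D) : IsHS k A m D :=
  ⟨hD.1, fun i h1 h2 => hD.2 i h1 (le_trans h2 (by exact_mod_cast h))⟩

lemma isHS_comp {n : ℕ} {D E : ℕ → (A →ₗ[k] A)}
    (hD : IsHS k A n D) (hE : IsHS k A n E) : IsHS k A n (comp D E) := by
  have expand : ∀ i : ℕ, i ≤ n → ∀ x y : A,
      (comp D E i) (x * y)
        = ∑ p ∈ antidiagonal i, ∑ r ∈ antidiagonal p.1, ∑ q ∈ antidiagonal p.2,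
            D r.1 (E q.1 x) * D r.2 (E q.2 y) := by
    intro i hin x y
    rw [comp, LinearMap.sum_apply]
    refine sum_congr rfl fun p hp => ?_
    have hp' := HasAntidiagonal.mem_antidiagonal.mp hp
    rw [Module.End.mul_apply, leib hE (le_trans (by omega) hin) x y, map_sum]
    rw [Finset.sum_comm]
    refine sum_congr rfl fun q hq => ?_
    exact leib hD (le_trans (by omega) hin) _ _
  constructor
  · show ∑ p ∈ antidiagonal 0, D p.1 * E p.2 = LinearMap.id
    simp [hD.1, hE.1, Module.End.mul_eq_comp]
  · intro i hi1 hin x y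
    have hin' : i ≤ n := by exact_mod_cast hin
    rw [expand i hin' x y,
      quad i (fun h1 h2 h3 h4 => D h1 (E h3 x) * D h2 (E h4 y))]
    refine sum_congr rfl fun p hp => ?_
    rw [comp, comp, LinearMap.sum_apply, LinearMap.sum_apply, Finset.sum_mul_sum]
    refine sum_congr rfl fun r hr => sum_congr rfl fun q hq => ?_
    rw [Module.End.mul_apply, Module.End.mul_apply]

lemma isHS_hsInv {n : ℕ} {D : ℕ → (A →ₗ[k] A)} (hD : IsHS k A n D) :
    IsHS k A n (hsInv D) := by
  set E := hsInv D with hE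
  have hone : comp D E = one := comp_hsInv D hD.1
  have key : ∀ i : ℕ, i ≤ n → ∀ x y : A,
      E i (x*y) = ∑ q ∈ antidiagonal i, E q.1 x * E q.2 y := by
    intro i
    induction i using Nat.strong_induction_on with
    | _ i IH =>
    intro hin x y
    rcases Nat.eq_zero_or_pos i with rfl | hpos
    · simp [hE, hsInv_zero]
    have hne0 : i ≠ 0 := by omega
    have hmem : ((0 : ℕ), i) ∈ antidiagonal i := by simp
    have hA : ∑ p ∈ antidiagonal i, D p.1 (E p.2 (x*y)) = 0 := by
      have h0 : (comp D E i) (x*y) = 0 := by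
        rw [hone]; simp [one, hne0]
      rw [comp, LinearMap.sum_apply] at h0
      simpa [Module.End.mul_apply] using h0
    have hB : E i (x*y)
        + ∑ p ∈ (antidiagonal i).erase (0, i), D p.1 (E p.2 (x*y)) = 0 := by
      rw [← Finset.add_sum_erase _ _ hmem] at hA
      rw [hD.1] at hA
      simpa using hA
    have hterm : ∀ p ∈ (antidiagonal i).erase (0, i),
        D p.1 (E p.2 (x*y))
          = ∑ q ∈ antidiagonal p.2, ∑ r ∈ antidiagonal p.1,
              D r.1 (E q.1 x) * D r.2 (E q.2 y) := by
      intro p hp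
      have hp1 := HasAntidiagonal.mem_antidiagonal.mp (mem_of_mem_erase hp)
      have hp2 : p.2 < i := by
        rcases Nat.lt_or_ge p.2 i with h | h
        · exact h
        · exfalso
          have : p = (0, i) := by
            have : p.2 = i := by omega
            have : p.1 = 0 := by omega
            exact Prod.ext this (by omega)
          exact (ne_of_mem_erase hp) this
      have hleibE : E p.2 (x*y) = ∑ q ∈ antidiagonal p.2, E q.1 x * E q.2 y := by
        rcases Nat.eq_zero_or_pos p.2 with h0 | hpos2
        · rw [h0]; simp [hE, hsInv_zero]
        · exact IH p.2 hp2 (by omega) x y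
      rw [hleibE, map_sum]
      exact sum_congr rfl fun q hq => leib hD (by omega) _ _
    have hB2 : E i (x*y)
        + ∑ p ∈ (antidiagonal i).erase (0, i), ∑ q ∈ antidiagonal p.2,
            ∑ r ∈ antidiagonal p.1, D r.1 (E q.1 x) * D r.2 (E q.2 y) = 0 := by
      rw [← Finset.sum_congr rfl hterm]
      exact hB
    have hfull : ∑ p ∈ antidiagonal i, ∑ q ∈ antidiagonal p.2,
        ∑ r ∈ antidiagonal p.1, D r.1 (E q.1 x) * D r.2 (E q.2 y) = 0 := by
      have hswap : ∑ p ∈ antidiagonal i, ∑ q ∈ antidiagonal p.2,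
          ∑ r ∈ antidiagonal p.1, D r.1 (E q.1 x) * D r.2 (E q.2 y)
          = ∑ p ∈ antidiagonal i, ∑ r ∈ antidiagonal p.1,
            ∑ q ∈ antidiagonal p.2, D r.1 (E q.1 x) * D r.2 (E q.2 y) :=
        sum_congr rfl fun p _ => Finset.sum_comm
      rw [hswap, quad i (fun h1 h2 h3 h4 => D h1 (E h3 x) * D h2 (E h4 y))]
      have : ∀ p ∈ antidiagonal i,
          (∑ a ∈ antidiagonal p.1, ∑ b ∈ antidiagonal p.2,
            D a.1 (E a.2 x) * D b.1 (E b.2 y))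
          = (comp D E p.1) x * (comp D E p.2) y := by
        intro p _
        rw [comp, comp, LinearMap.sum_apply, LinearMap.sum_apply, Finset.sum_mul_sum]
        exact sum_congr rfl fun r _ => sum_congr rfl fun q _ => by
          rw [Module.End.mul_apply, Module.End.mul_apply]
      rw [Finset.sum_congr rfl this]
      refine Finset.sum_eq_zero fun p hp => ?_
      have hp1 := HasAntidiagonal.mem_antidiagonal.mp hp
      rcases Nat.eq_zero_or_pos p.1 with h0 | hpos1
      · have : p.2 ≠ 0 := by omega
        rw [hone]; simp [one, this]
      · have : p.1 ≠ 0 := by omega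
        rw [hone]; simp [one, this]
    have hC : (∑ q ∈ antidiagonal i, E q.1 x * E q.2 y)
        + ∑ p ∈ (antidiagonal i).erase (0, i), ∑ q ∈ antidiagonal p.2,
            ∑ r ∈ antidiagonal p.1, D r.1 (E q.1 x) * D r.2 (E q.2 y) = 0 := by
      have hsplit := Finset.add_sum_erase _
        (fun p : ℕ × ℕ => ∑ q ∈ antidiagonal p.2, ∑ r ∈ antidiagonal p.1,
          D r.1 (E q.1 x) * D r.2 (E q.2 y)) hmem
      have h00 : ∑ q ∈ antidiagonal i, ∑ r ∈ antidiagonal (0:ℕ),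
          D r.1 (E q.1 x) * D r.2 (E q.2 y)
          = ∑ q ∈ antidiagonal i, E q.1 x * E q.2 y := by
        refine sum_congr rfl fun q _ => ?_
        simp [hD.1]
      have hC' : (∑ q ∈ antidiagonal i, ∑ r ∈ antidiagonal (0:ℕ),
          D r.1 (E q.1 x) * D r.2 (E q.2 y))
          + ∑ p ∈ (antidiagonal i).erase (0, i), ∑ q ∈ antidiagonal p.2,
            ∑ r ∈ antidiagonal p.1, D r.1 (E q.1 x) * D r.2 (E q.2 y) = 0 :=
        hsplit.trans hfull
      rw [h00] at hC'
      exact hC'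
    exact add_right_cancel (hB2.trans hC.symm)
  constructor
  · exact hsInv_zero D
  · intro i hi1 hin x y
    exact key i (by exact_mod_cast hin) x y

/-! ### Shifts -/

/-- Place `G` at the multiples of `r` : `G(t) ↦ G(t^r)`. -/
def shift (r : ℕ) (G : ℕ → (A →ₗ[k] A)) : ℕ → (A →ₗ[k] A) :=
  fun i => if r ∣ i then G (i / r) else 0

lemma shift_mul {r : ℕ} (hr : 1 ≤ r) (G : ℕ → (A →ₗ[k] A)) (j : ℕ) :
    shift r G (r * j) = G j := by
  rw [shift, if_pos (dvd_mul_right r j), Nat.mul_div_cancel_left j (by omega)]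

lemma shift_not {r i : ℕ} (G : ℕ → (A →ₗ[k] A)) (h : ¬ r ∣ i) :
    shift r G i = 0 := by
  rw [shift, if_neg h]

lemma shift_zero {r : ℕ} (hr : 1 ≤ r) {ρ : ℕ} {G : ℕ → (A →ₗ[k] A)}
    (hG : IsHS k A ρ G) : shift r G 0 = LinearMap.id := by
  have := shift_mul hr G 0
  rw [Nat.mul_zero] at this
  rw [this, hG.1]

lemma isHS_shift {ρ m r : ℕ} (hr : 1 ≤ r) {G : ℕ → (A →ₗ[k] A)}
    (hG : IsHS k A ρ G) (hm : m + 1 ≤ r * (ρ + 1)) :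
    IsHS k A m (shift r G) := by
  constructor
  · exact shift_zero hr hG
  · intro i hi1 him x y
    have him' : i ≤ m := by exact_mod_cast him
    by_cases hdvd : r ∣ i
    · obtain ⟨j, rfl⟩ := hdvd
      have hj1 : 1 ≤ j := by
        rcases Nat.eq_zero_or_pos j with rfl | h
        · simp at hi1
        · exact h
      have hjρ : j ≤ ρ := by
        by_contra hcon
        push_neg at hcon
        have : r * (ρ + 1) ≤ r * j := Nat.mul_le_mul_left r hcon
        omega
      rw [shift_mul hr, leib hG hjρ x y]
      have himg : ∀ p ∈ antidiagonal (r * j),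
          p ∉ (antidiagonal j).image (fun q : ℕ × ℕ => (r * q.1, r * q.2)) →
          shift r G p.1 x * shift r G p.2 y = 0 := by
        rintro ⟨a, b⟩ hab hnotin
        have hab' := HasAntidiagonal.mem_antidiagonal.mp hab
        by_cases ha : r ∣ a
        · by_cases hb : r ∣ b
          · exfalso
            obtain ⟨c, rfl⟩ := ha
            obtain ⟨d, rfl⟩ := hb
            apply hnotin
            rw [mem_image]
            refine ⟨(c, d), HasAntidiagonal.mem_antidiagonal.mpr ?_, rfl⟩
            have : r * (c + d) = r * j := by rw [Nat.mul_add]; omega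
            exact Nat.eq_of_mul_eq_mul_left (by omega) this
          · rw [shift_not G hb, LinearMap.zero_apply, mul_zero]
        · rw [shift_not G ha, LinearMap.zero_apply, zero_mul]
      rw [← Finset.sum_subset (fun p hp => ?_) himg]
      · rw [Finset.sum_image (fun p hp q hq hpq => ?_)]
        · exact sum_congr rfl fun q _ => by
            rw [shift_mul hr, shift_mul hr]
        · have h1 : p.1 = q.1 := by
            have := congrArg Prod.fst hpq
            simp only at this
            exact Nat.eq_of_mul_eq_mul_left (by omega) this
          have h2 : p.2 = q.2 := by
            have := congrArg Prod.snd hpq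
            simp only at this
            exact Nat.eq_of_mul_eq_mul_left (by omega) this
          exact Prod.ext h1 h2
      · rw [mem_image] at hp
        obtain ⟨q, hq, rfl⟩ := hp
        have := HasAntidiagonal.mem_antidiagonal.mp hq
        rw [HasAntidiagonal.mem_antidiagonal]
        rw [← Nat.mul_add, this]
    · rw [shift_not G hdvd, LinearMap.zero_apply]
      symm
      refine Finset.sum_eq_zero fun p hp => ?_
      have hp' := HasAntidiagonal.mem_antidiagonal.mp hp
      by_cases ha : r ∣ p.1
      · have hb : ¬ r ∣ p.2 := by
          intro hb
          exact hdvd (hp' ▸ Nat.dvd_add ha hb)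
        rw [shift_not G hb, LinearMap.zero_apply, mul_zero]
      · rw [shift_not G ha, LinearMap.zero_apply, zero_mul]

/-! ### Low-degree behaviour of inverses and compositions -/

lemma hsInv_low {Q : ℕ → (A →ₗ[k] A)} {r : ℕ}
    (hlow : ∀ j, 1 ≤ j → j < r → Q j = 0) :
    ∀ j, 1 ≤ j → j < r → hsInv Q j = 0 := by
  intro j
  induction j using Nat.strong_induction_on with
  | _ j IH =>
  intro hj1 hjr
  match j, hj1 with
  | (i+1), _ =>
    rw [hsInv_succ]
    rw [Finset.sum_eq_zero, neg_zero]
    intro l hl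
    have hl' : l < i + 1 := mem_range.mp hl
    rcases Nat.eq_zero_or_pos l with rfl | hlpos
    · rw [hlow (i+1-0) (by omega) (by omega), zero_mul]
    · rw [IH l (by omega) hlpos (by omega), mul_zero]

lemma hsInv_at {Q : ℕ → (A →ₗ[k] A)} {r : ℕ} (hr : 1 ≤ r)
    (hlow : ∀ j, 1 ≤ j → j < r → Q j = 0) :
    hsInv Q r = - Q r := by
  match r, hr with
  | (i+1), _ =>
    rw [hsInv_succ]
    rw [Finset.sum_eq_single 0]
    · rw [hsInv_zero, Nat.sub_zero, Module.End.mul_eq_comp, LinearMap.comp_id]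
    · intro l hl hlne
      have hl' : l < i + 1 := mem_range.mp hl
      rw [hsInv_low hlow l (by omega) (by omega), mul_zero]
    · intro h
      exact absurd (mem_range.mpr (by omega)) h

/-- Split a sum over the antidiagonal of `r ≥ 1` whose middle terms vanish. -/
lemma sum_antidiagonal_ends {M : Type*} [AddCommMonoid M] {r : ℕ} (hr : 1 ≤ r)
    (f : ℕ × ℕ → M)
    (hmid : ∀ p ∈ antidiagonal r, 1 ≤ p.1 → 1 ≤ p.2 → f p = 0) :
    ∑ p ∈ antidiagonal r, f p = f (0, r) + f (r, 0) := by
  have h1 : ((0:ℕ), r) ∈ antidiagonal r := by simp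
  rw [← Finset.add_sum_erase _ f h1]
  congr 1
  have h2 : ((r:ℕ), 0) ∈ (antidiagonal r).erase (0, r) := by
    rw [mem_erase]
    refine ⟨?_, by simp⟩
    intro hc
    have := congrArg Prod.fst hc
    simp only at this
    omega
  rw [← Finset.add_sum_erase _ f h2]
  have : ∑ p ∈ ((antidiagonal r).erase (0, r)).erase (r, 0), f p = 0 := by
    refine Finset.sum_eq_zero fun p hp => ?_
    have hp0 := mem_of_mem_erase hp
    have hpr := HasAntidiagonal.mem_antidiagonal.mp (mem_of_mem_erase hp0)
    have hne1 : p ≠ (r, 0) := ne_of_mem_erase hp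
    have hne2 : p ≠ (0, r) := ne_of_mem_erase hp0
    refine hmid p (mem_of_mem_erase hp0) ?_ ?_
    · rcases Nat.eq_zero_or_pos p.1 with h | h
      · exfalso; apply hne2; exact Prod.ext h (by omega)
      · exact h
    · rcases Nat.eq_zero_or_pos p.2 with h | h
      · exfalso; apply hne1; exact Prod.ext (by omega) h
      · exact h
  rw [this, add_zero]

lemma comp_low {F Q : ℕ → (A →ₗ[k] A)} {r : ℕ}
    (hQlow : ∀ j, 1 ≤ j → j < r → Q j = 0) :
    ∀ j, j < r → comp F (hsInv Q) j = F j := by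
  intro j hj
  rw [comp, Finset.sum_eq_single (j, 0)]
  · rw [hsInv_zero, Module.End.mul_eq_comp, LinearMap.comp_id]
  · rintro ⟨a, b⟩ hab hne
    have hab' := HasAntidiagonal.mem_antidiagonal.mp hab
    have hb : 1 ≤ b := by
      rcases Nat.eq_zero_or_pos b with rfl | h
      · exfalso; apply hne; exact Prod.ext (by omega) rfl
      · exact h
    rw [hsInv_low hQlow b hb (by omega), mul_zero]
  · intro h; exact absurd (HasAntidiagonal.mem_antidiagonal.mpr (by omega)) h

lemma comp_at {F Q : ℕ → (A →ₗ[k] A)} {r : ℕ} (hr : 1 ≤ r)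
    (hF0 : F 0 = LinearMap.id)
    (hQlow : ∀ j, 1 ≤ j → j < r → Q j = 0) :
    comp F (hsInv Q) r = F r - Q r := by
  rw [comp, sum_antidiagonal_ends hr _ (fun p hp h1 h2 => ?_)]
  · simp only [hF0, hsInv_at hr hQlow, hsInv_zero, Module.End.mul_eq_comp,
      LinearMap.id_comp, LinearMap.comp_id]
    abel
  · have := HasAntidiagonal.mem_antidiagonal.mp hp
    rw [hsInv_low hQlow p.2 h2 (by omega), mul_zero]

/-! ### Extension by zero -/

lemma ext_zero {n : ℕ} {F : ℕ → (A →ₗ[k] A)} (hF : IsHS k A n F)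
    (h1 : F 1 = 0)
    (hvan : ∀ j, 2 ≤ j → j ≤ n → (Odd n ∨ Odd j) → F j = 0) :
    ∃ Fbar : ℕ → (A →ₗ[k] A), IsHS k A (n+1 : ℕ) Fbar ∧ ∀ i ≤ n, Fbar i = F i := by
  refine ⟨fun i => if i ≤ n then F i else 0, ⟨?_, ?_⟩, fun i hi => if_pos hi⟩
  · simp only [Nat.zero_le, if_pos]
    exact hF.1
  · intro i hi1 hin x y
    dsimp only
    have hin' : i ≤ n + 1 := by exact_mod_cast hin
    by_cases hi : i ≤ n
    · rw [if_pos hi, leib hF hi x y]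
      refine sum_congr rfl fun p hp => ?_
      have hp' := HasAntidiagonal.mem_antidiagonal.mp hp
      rw [if_pos (by omega : p.1 ≤ n), if_pos (by omega : p.2 ≤ n)]
    · have hieq : i = n + 1 := by omega
      rw [if_neg hi, LinearMap.zero_apply]
      symm
      refine Finset.sum_eq_zero fun p hp => ?_
      have hp' := HasAntidiagonal.mem_antidiagonal.mp hp
      rcases Nat.eq_zero_or_pos p.1 with hp1 | hp1
      · have : ¬ p.2 ≤ n := by omega
        rw [if_neg this, LinearMap.zero_apply, mul_zero]
      · rcases Nat.eq_zero_or_pos p.2 with hp2 | hp2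
        · have : ¬ p.1 ≤ n := by omega
          rw [if_neg this, LinearMap.zero_apply, zero_mul]
        · have hb1 : p.1 ≤ n := by omega
          have hb2 : p.2 ≤ n := by omega
          have hzero : F p.1 = 0 ∨ F p.2 = 0 := by
            by_cases hodd : Odd n
            · rcases Nat.lt_or_ge p.1 2 with h | h
              · left; have : p.1 = 1 := by omega
                rw [this]; exact h1
              · left; exact hvan p.1 h hb1 (Or.inl hodd)
            · have hne : n % 2 = 0 := by
                rcases Nat.even_or_odd n with he | ho
                · exact Nat.even_iff.mp he
                · exact absurd ho hodd
              have : p.1 % 2 = 1 ∨ p.2 % 2 = 1 := by omega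
              rcases this with h | h
              · rcases Nat.lt_or_ge p.1 2 with h' | h'
                · left; have : p.1 = 1 := by omega
                  rw [this]; exact h1
                · left; exact hvan p.1 h' hb1 (Or.inr (Nat.odd_iff.mpr h))
              · rcases Nat.lt_or_ge p.2 2 with h' | h'
                · right; have : p.2 = 1 := by omega
                  rw [this]; exact h1
                · right; exact hvan p.2 h' hb2 (Or.inr (Nat.odd_iff.mpr h))
          rcases hzero with h | h
          · rw [if_pos hb1, h, LinearMap.zero_apply, zero_mul]
          · rw [if_pos hb2, h, LinearMap.zero_apply, mul_zero]

/-! ### The crux lemma -/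

lemma crux {n ρ : ℕ}
    (hall : ∀ d : Derivation k A A, ∃ G : ℕ → (A →ₗ[k] A),
      IsHS k A ρ G ∧ G 1 = d.toLinearMap)
    (harith : ∀ m, 2 ≤ m → (Odd n ∨ Odd m) → n + 2 ≤ m * (ρ + 1)) :
    ∀ t m, m + t = n + 1 → ∀ F : ℕ → (A →ₗ[k] A), IsHS k A n F → F 1 = 0 →
      (∀ j, 2 ≤ j → j < m → (Odd n ∨ Odd j) → F j = 0) →
      ∃ Fbar : ℕ → (A →ₗ[k] A), IsHS k A (n+1 : ℕ) Fbar ∧ ∀ i ≤ n, Fbar i = F i := by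
  intro t
  induction t with
  | zero =>
    intro m hm F hF h1 hvan
    exact ext_zero hF h1 (fun j hj2 hjn hpar => hvan j hj2 (by omega) hpar)
  | succ t IH =>
    intro m hm F hF h1 hvan
    by_cases hS : 2 ≤ m ∧ (Odd n ∨ Odd m)
    · obtain ⟨hm2, hpar⟩ := hS
      have hmn : m ≤ n := by omega
      have hzero : ∀ p : ℕ × ℕ, p.1 + p.2 = m → 1 ≤ p.1 → 1 ≤ p.2 →
          F p.1 = 0 ∨ F p.2 = 0 := by
        intro p hpm hp1 hp2
        have hkill : ∀ a, 1 ≤ a → a < m → (Odd n ∨ Odd a) → F a = 0 := by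
          intro a ha1 ham hpa
          rcases Nat.lt_or_ge a 2 with h | h
          · have : a = 1 := by omega
            rw [this, h1]
          · exact hvan a h ham hpa
        rcases hpar with ho | ho
        · exact Or.inl (hkill p.1 hp1 (by omega) (Or.inl ho))
        · have hm1 : m % 2 = 1 := Nat.odd_iff.mp ho
          rcases (by omega : p.1 % 2 = 1 ∨ p.2 % 2 = 1) with h' | h'
          · exact Or.inl (hkill p.1 hp1 (by omega) (Or.inr (Nat.odd_iff.mpr h')))
          · exact Or.inr (hkill p.2 hp2 (by omega) (Or.inr (Nat.odd_iff.mpr h')))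
      have hder : ∀ x y : A, F m (x * y) = x * F m y + F m x * y := by
        intro x y
        rw [leib hF hmn x y, sum_antidiagonal_ends (by omega) _ (fun p hp hp1 hp2 => ?_)]
        · rw [hF.1]; rfl
        · have hpm := HasAntidiagonal.mem_antidiagonal.mp hp
          rcases hzero p hpm hp1 hp2 with h | h
          · rw [h, LinearMap.zero_apply, zero_mul]
          · rw [h, LinearMap.zero_apply, mul_zero]
      have hone : F m (1 : A) = 0 := by
        have h : F m ((1:A) * 1) = 1 * F m 1 + F m 1 * 1 := hder 1 1
        have h' : F m (1:A) = F m 1 + F m 1 := by simpa using h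
        have h2 : F m (1:A) + F m 1 = F m 1 + 0 := by rw [add_zero]; exact h'.symm
        exact add_left_cancel h2
      set d : Derivation k A A :=
        { toLinearMap := F m
          map_one_eq_zero' := hone
          leibniz' := fun a b => by
            rw [smul_eq_mul, smul_eq_mul, hder a b, mul_comm (F m a) b] } with hd
      obtain ⟨G, hG, hG1⟩ := hall d
      set Q := shift m G with hQdef
      have hQ : IsHS k A (n+1 : ℕ) Q :=
        isHS_shift (by omega) hG (by have := harith m hm2 hpar; omega)
      have hQn : IsHS k A n Q := isHS_mono (by omega) hQ
      have hQlow : ∀ j, 1 ≤ j → j < m → Q j = 0 := by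
        intro j hj1 hjm
        refine shift_not G (fun hdvd => ?_)
        have := Nat.le_of_dvd (by omega) hdvd
        omega
      have hQm : Q m = F m := by
        have := shift_mul (r := m) (by omega) G 1
        rw [Nat.mul_one] at this
        rw [hQdef, this, hG1, hd]
      set F' := comp F (hsInv Q) with hF'def
      have hF' : IsHS k A n F' := isHS_comp hF (isHS_hsInv hQn)
      have hF'low : ∀ j, j < m → F' j = F j := comp_low hQlow
      have hF'1 : F' 1 = 0 := by rw [hF'low 1 (by omega), h1]
      have hF'm : F' m = 0 := by
        rw [hF'def, comp_at (by omega) hF.1 hQlow, hQm, sub_self]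
      have hvan' : ∀ j, 2 ≤ j → j < m + 1 → (Odd n ∨ Odd j) → F' j = 0 := by
        intro j hj2 hjm hpar'
        rcases Nat.lt_or_ge j m with h | h
        · rw [hF'low j h]; exact hvan j hj2 h hpar'
        · have : j = m := by omega
          rw [this]; exact hF'm
      obtain ⟨Fb', hFb', hagree'⟩ := IH (m+1) (by omega) F' hF' hF'1 hvan'
      refine ⟨comp Fb' Q, isHS_comp hFb' hQ, fun i hi => ?_⟩
      have hstep1 : comp Fb' Q i = comp F' Q i := by
        refine sum_congr rfl fun p hp => ?_
        have hp' := HasAntidiagonal.mem_antidiagonal.mp hp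
        rw [hagree' p.1 (by omega)]
      have hstep2 : comp (comp F (hsInv Q)) Q = F := by
        rw [comp_assoc, hsInv_comp Q hQ.1, comp_one]
      rw [hstep1, hF'def]
      exact congrFun hstep2 i
    · refine IH (m+1) (by omega) F hF h1 (fun j hj2 hjm hpar => ?_)
      rcases Nat.lt_or_ge j m with h | h
      · exact hvan j hj2 h hpar
      · have : j = m := by omega
        subst this
        exact absurd ⟨hj2, hpar⟩ hS

end HSStmt19

open Finset HSStmt19

/-- **Statement 19.** Let `n ≥ 1` and `ρ(n) = (n+1)/2` if `n` is odd,
`ρ(n) = ⌊(n+1)/3⌋` if `n` is even. If every `k`-derivation of `A` is `ρ(n)`-integrable,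
then for every `n`-integrable `k`-derivation `δ` of `A` the following are equivalent:
(a) every `n`-integral of `δ` is `(n+1)`-integrable; (b) some `n`-integral of `δ` is
`(n+1)`-integrable. -/
theorem stmt_19 (k A : Type*) [CommRing k] [CommRing A] [Algebra k A]
    (n : ℕ) (hn : 1 ≤ n)
    (hall : ∀ δ : Derivation k A A, ∃ D : ℕ → (A →ₗ[k] A),
      IsHS k A ((if Odd n then (n + 1) / 2 else (n + 1) / 3 : ℕ)) D ∧
      D 1 = δ.toLinearMap)
    (δ : Derivation k A A)
    (hδ : ∃ D : ℕ → (A →ₗ[k] A), IsHS k A n D ∧ D 1 = δ.toLinearMap) :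
    (∀ D : ℕ → (A →ₗ[k] A), IsHS k A n D → D 1 = δ.toLinearMap →
      ∃ E : ℕ → (A →ₗ[k] A), IsHS k A (n + 1 : ℕ) E ∧ ∀ i ≤ n, E i = D i) ↔
    (∃ D : ℕ → (A →ₗ[k] A), IsHS k A n D ∧ D 1 = δ.toLinearMap ∧
      ∃ E : ℕ → (A →ₗ[k] A), IsHS k A (n + 1 : ℕ) E ∧ ∀ i ≤ n, E i = D i) := by
  constructor
  · intro ha
    obtain ⟨D, hD, hD1⟩ := hδ
    obtain ⟨E, hE, hEag⟩ := ha D hD hD1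
    exact ⟨D, hD, hD1, E, hE, hEag⟩
  · rintro ⟨E, hE, hE1, Ebar, hEbar, hEag⟩ D hD hD1
    set ρ : ℕ := (if Odd n then (n + 1) / 2 else (n + 1) / 3) with hρ
    have harith : ∀ m, 2 ≤ m → (Odd n ∨ Odd m) → n + 2 ≤ m * (ρ + 1) := by
      intro m hm hpar
      by_cases hodd : Odd n
      · have hρ2 : ρ = (n+1)/2 := by rw [hρ, if_pos hodd]
        have hn2 : n % 2 = 1 := Nat.odd_iff.mp hodd
        have h2 : n + 2 ≤ 2 * (ρ + 1) := by rw [hρ2]; omega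
        calc n + 2 ≤ 2 * (ρ + 1) := h2
          _ ≤ m * (ρ + 1) := Nat.mul_le_mul_right _ hm
      · have hm3 : 3 ≤ m := by
          rcases hpar with h | h
          · exact absurd h hodd
          · have := Nat.odd_iff.mp h
            omega
        have hρ3 : ρ = (n+1)/3 := by rw [hρ, if_neg hodd]
        have h2 : n + 2 ≤ 3 * (ρ + 1) := by rw [hρ3]; omega
        calc n + 2 ≤ 3 * (ρ + 1) := h2
          _ ≤ m * (ρ + 1) := Nat.mul_le_mul_right _ hm3
    set F := comp D (hsInv E) with hFdef
    have hF : IsHS k A n F := isHS_comp hD (isHS_hsInv hE)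
    have hF1 : F 1 = 0 := by
      have hi1 : hsInv E 1 = - E 1 := by
        have h := hsInv_succ E 0
        simpa [hsInv_zero, Module.End.mul_eq_comp] using h
      have hends : F 1 = D 0 * hsInv E 1 + D 1 * hsInv E 0 := by
        rw [hFdef]
        exact sum_antidiagonal_ends (le_refl 1) _ (fun p hp h1 h2 => by
          have := HasAntidiagonal.mem_antidiagonal.mp hp; omega)
      rw [hends, hi1, hsInv_zero, hD.1, hE1, hD1, Module.End.mul_eq_comp,
        Module.End.mul_eq_comp, LinearMap.id_comp, LinearMap.comp_id]
      exact neg_add_cancel _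
    obtain ⟨Fbar, hFbar, hFag⟩ := crux hall harith (n - 1) 2 (by omega) F hF hF1
      (fun j hj2 hj hpar => by omega)
    refine ⟨comp Fbar Ebar, isHS_comp hFbar hEbar, fun i hi => ?_⟩
    have hstep1 : comp Fbar Ebar i = comp F E i := by
      refine sum_congr rfl fun p hp => ?_
      have hp' := HasAntidiagonal.mem_antidiagonal.mp hp
      rw [hFag p.1 (by omega), hEag p.2 (by omega)]
    have hstep2 : comp (comp D (hsInv E)) E = D := by
      rw [comp_assoc, hsInv_comp E hE.1, comp_one]
    rw [hstep1, hFdef]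
    exact congrFun hstep2 i
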